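/- Let U = {(x,y,t) ∈ ℝ³ : y² − 4xt > 0} and define H(x,y,t) = (y² − 4xt)^{−1/2} on U. Then H satisfies the hyper-CR equation H_{xt} − H_{yy} + H_y H_{xx} − H_x H_{xy} = 0 on U. -/

import Mathlib

/-- Partial derivative of `f : ℝ³ → ℝ` in direction `v`, as a function. -/
noncomputable def pd (v : ℝ × ℝ × ℝ) (f : ℝ × ℝ × ℝ → ℝ) : ℝ × ℝ × ℝ → ℝ :=
  fun q => fderiv ℝ f q v

/-- ∂/∂x for functions of (x, y, t). -/
noncomputable def px : (ℝ × ℝ × ℝ → ℝ) → ℝ × ℝ × ℝ → ℝ := pd (1, 0, 0)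
/-- ∂/∂y for functions of (x, y, t). -/
noncomputable def py : (ℝ × ℝ × ℝ → ℝ) → ℝ × ℝ × ℝ → ℝ := pd (0, 1, 0)
/-- ∂/∂t for functions of (x, y, t). -/
noncomputable def pt : (ℝ × ℝ × ℝ → ℝ) → ℝ × ℝ × ℝ → ℝ := pd (0, 0, 1)

namespace Stmt3Aux

noncomputable def XX : (ℝ × ℝ × ℝ) →L[ℝ] ℝ := ContinuousLinearMap.fst ℝ ℝ (ℝ × ℝ)
noncomputable def YY : (ℝ × ℝ × ℝ) →L[ℝ] ℝ :=
  (ContinuousLinearMap.fst ℝ ℝ ℝ).comp (ContinuousLinearMap.snd ℝ ℝ (ℝ × ℝ))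
noncomputable def TT : (ℝ × ℝ × ℝ) →L[ℝ] ℝ :=
  (ContinuousLinearMap.snd ℝ ℝ ℝ).comp (ContinuousLinearMap.snd ℝ ℝ (ℝ × ℝ))

noncomputable def LL (a b c : ℝ) : (ℝ × ℝ × ℝ) →L[ℝ] ℝ := a • XX + b • YY + c • TT

@[simp] lemma LL_apply (a b c : ℝ) (v : ℝ × ℝ × ℝ) :
    LL a b c v = a * v.1 + b * v.2.1 + c * v.2.2 := by
  simp [LL, XX, YY, TT]

noncomputable def g : ℝ × ℝ × ℝ → ℝ := fun q => q.2.1 ^ 2 - 4 * q.1 * q.2.2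

lemma hasFDerivAt_g (q : ℝ × ℝ × ℝ) :
    HasFDerivAt g (LL (-4 * q.2.2) (2 * q.2.1) (-4 * q.1)) q := by
  have hX : HasFDerivAt (fun p : ℝ × ℝ × ℝ => p.1) XX q := hasFDerivAt_fst
  have hY : HasFDerivAt (fun p : ℝ × ℝ × ℝ => p.2.1) YY q :=
    hasFDerivAt_fst.comp q hasFDerivAt_snd
  have hT : HasFDerivAt (fun p : ℝ × ℝ × ℝ => p.2.2) TT q :=
    hasFDerivAt_snd.comp q hasFDerivAt_snd
  have hg' : g = fun q : ℝ × ℝ × ℝ => q.2.1 * q.2.1 - 4 * q.1 * q.2.2 := by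
    funext r; simp [g]; ring
  rw [hg']
  have h := (hY.mul hY).sub ((hX.const_mul 4).mul hT)
  convert h using 1
  iterate 6 rfl
  refine ContinuousLinearMap.ext fun v => ?_
  simp [LL, XX, YY, TT]
  ring

lemma hasFDerivAt_gp (p : ℝ) {q : ℝ × ℝ × ℝ} (hq : 0 < g q) :
    HasFDerivAt (fun r => g r ^ p)
      ((p * g q ^ (p - 1)) • LL (-4 * q.2.2) (2 * q.2.1) (-4 * q.1)) q :=
  (hasFDerivAt_g q).rpow_const (Or.inl hq.ne')

lemma pd_gp (p : ℝ) (v : ℝ × ℝ × ℝ) {q : ℝ × ℝ × ℝ} (hq : 0 < g q) :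
    pd v (fun r => g r ^ p) q =
      (p * g q ^ (p - 1)) * ((-4 * q.2.2) * v.1 + (2 * q.2.1) * v.2.1 + (-4 * q.1) * v.2.2) := by
  rw [pd, (hasFDerivAt_gp p hq).fderiv]
  simp

end Stmt3Aux

open Stmt3Aux in
theorem stmt3 :
    let U : Set (ℝ × ℝ × ℝ) := {q | q.2.1 ^ 2 - 4 * q.1 * q.2.2 > 0}
    let H : ℝ × ℝ × ℝ → ℝ := fun q => (q.2.1 ^ 2 - 4 * q.1 * q.2.2) ^ (-(1 / 2 : ℝ))
    ∀ q ∈ U,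
      pt (px H) q - py (py H) q + py H q * px (px H) q - px H q * py (px H) q = 0 := by
  intro U H q hq
  have hH : H = fun r => g r ^ (-(1 / 2 : ℝ)) := rfl
  have hUopen : IsOpen U := isOpen_lt continuous_const (by fun_prop)
  have hUnhds : U ∈ nhds q := hUopen.mem_nhds hq
  have hgq : 0 < g q := hq
  have hexp1 : (-(1/2:ℝ)) - 1 = -(3/2:ℝ):= by norm_num
  have hexp : (-(3/2:ℝ)) - 1 = -(5/2:ℝ) := by norm_num
  -- first derivatives of H on U
  have hpx : ∀ r ∈ U, px H r = 2 * r.2.2 * g r ^ (-(3 / 2 : ℝ)) := by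
    intro r hr
    rw [hH]
    show pd (1,0,0) (fun r => g r ^ (-(1/2:ℝ))) r = _
    rw [pd_gp _ _ hr, hexp1]
    ring
  have hpy : ∀ r ∈ U, py H r = -1 * r.2.1 * g r ^ (-(3 / 2 : ℝ)) := by
    intro r hr
    rw [hH]
    show pd (0,1,0) (fun r => g r ^ (-(1/2:ℝ))) r = _
    rw [pd_gp _ _ hr, hexp1]
    ring
  have hevx : px H =ᶠ[nhds q] (fun r => 2 * r.2.2 * g r ^ (-(3/2:ℝ))) :=
    Filter.eventuallyEq_of_mem hUnhds hpx
  have hevy : py H =ᶠ[nhds q] (fun r => -1 * r.2.1 * g r ^ (-(3/2:ℝ))) :=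
    Filter.eventuallyEq_of_mem hUnhds hpy
  have hT : HasFDerivAt (fun p : ℝ × ℝ × ℝ => p.2.2) TT q :=
    hasFDerivAt_snd.comp q hasFDerivAt_snd
  have hY : HasFDerivAt (fun p : ℝ × ℝ × ℝ => p.2.1) YY q :=
    hasFDerivAt_fst.comp q hasFDerivAt_snd
  have hgp := hasFDerivAt_gp (-(3/2:ℝ)) hgq
  have hdx := (hT.const_mul (2:ℝ)).mul hgp
  have hdy := (hY.const_mul (-1:ℝ)).mul hgp
  obtain ⟨x, y, t⟩ := q
  have hab : g (x,y,t) ^ (-(3/2:ℝ)) = g (x,y,t) * g (x,y,t) ^ (-(5/2:ℝ)) := by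
    have h := (Real.rpow_add hgq 1 (-(5/2:ℝ))).symm
    rw [Real.rpow_one] at h
    norm_num at h ⊢
    rw [← h]
  have e1 : pt (px H) (x,y,t)
      = 2 * g (x,y,t) ^ (-(3/2:ℝ)) + 12 * x * t * g (x,y,t) ^ (-(5/2:ℝ)) := by
    show pd (0,0,1) (px H) (x,y,t) = _
    rw [pd, hevx.fderiv_eq, (show fderiv ℝ (fun r : ℝ × ℝ × ℝ => 2 * r.2.2 * g r ^ (-(3/2:ℝ))) (x,y,t) = _ from hdx.fderiv)]
    simp [hexp, TT]
    ring
  have e2 : py (py H) (x,y,t)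
      = 3 * y ^ 2 * g (x,y,t) ^ (-(5/2:ℝ)) - g (x,y,t) ^ (-(3/2:ℝ)) := by
    show pd (0,1,0) (py H) (x,y,t) = _
    rw [pd, hevy.fderiv_eq, (show fderiv ℝ (fun r : ℝ × ℝ × ℝ => -1 * r.2.1 * g r ^ (-(3/2:ℝ))) (x,y,t) = _ from hdy.fderiv)]
    simp [hexp, YY]
    ring
  have e3 : px (px H) (x,y,t) = 12 * t ^ 2 * g (x,y,t) ^ (-(5/2:ℝ)) := by
    show pd (1,0,0) (px H) (x,y,t) = _
    rw [pd, hevx.fderiv_eq, (show fderiv ℝ (fun r : ℝ × ℝ × ℝ => 2 * r.2.2 * g r ^ (-(3/2:ℝ))) (x,y,t) = _ from hdx.fderiv)]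
    simp [hexp, TT]
    ring
  have e4 : py (px H) (x,y,t) = -6 * t * y * g (x,y,t) ^ (-(5/2:ℝ)) := by
    show pd (0,1,0) (px H) (x,y,t) = _
    rw [pd, hevx.fderiv_eq, (show fderiv ℝ (fun r : ℝ × ℝ × ℝ => 2 * r.2.2 * g r ^ (-(3/2:ℝ))) (x,y,t) = _ from hdx.fderiv)]
    simp [hexp, TT]
    ring
  have e5 := hpy _ hq
  have e6 := hpx _ hq
  rw [e1, e2, e3, e4, e5, e6, hab]
  have hGdef : g (x,y,t) = y ^ 2 - 4 * x * t := rfl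
  rw [hGdef]
  ring
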